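/- arXiv:1503.03648 — 3 statements merged into one kernel-verified Lean document; each statement's English description precedes it below -/
import Mathlib

section
/- Let p ≥ 2 be an integer and define g_p(t) = (p−1)t^p + p·t^{p−1} − 1 for t ∈ [0,1]. Then g_p is strictly increasing on [0,1], g_p(0) = −1 and g_p(1) = 2(p−1) > 0, so there is a unique ρ'_p ∈ (0,1) with g_p(ρ'_p) = 0. Moreover, for every ρ ∈ (0,1) the strict inequality 2πp(1 − ρ^p)/(1 + ρ^p) > 2π(1 − ρ)/(1 + ρ) + 2π(p − 1) holds if and only if g_p(ρ) < 0, i.e. if and only if ρ < ρ'_p. Finally ρ'_2 = √2 − 1. -/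
/-- Properties of `g_p(t) = (p−1)t^p + p t^{p−1} − 1`: it is strictly increasing on `[0,1]`
with `g_p(0) = −1` and `g_p(1) = 2(p−1) > 0`, it has a unique zero `ρ'_p ∈ (0,1)`, the energy
comparison `2πp(1−ρ^p)/(1+ρ^p) > 2π(1−ρ)/(1+ρ) + 2π(p−1)` holds iff `g_p(ρ) < 0` iff
`ρ < ρ'_p`, and `ρ'_2 = √2 − 1`. -/
theorem stmt11 (p : ℕ) (hp : 2 ≤ p) (g : ℝ → ℝ)
    (hg : g = fun t : ℝ => ((p : ℝ) - 1) * t ^ p + (p : ℝ) * t ^ (p - 1) - 1) :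
    StrictMonoOn g (Set.Icc (0 : ℝ) 1) ∧
    g 0 = -1 ∧ g 1 = 2 * ((p : ℝ) - 1) ∧ (0 : ℝ) < 2 * ((p : ℝ) - 1) ∧
    ∃ ρ' : ℝ, ρ' ∈ Set.Ioo (0 : ℝ) 1 ∧ g ρ' = 0 ∧
      (∀ t ∈ Set.Ioo (0 : ℝ) 1, g t = 0 → t = ρ') ∧
      (∀ ρ ∈ Set.Ioo (0 : ℝ) 1,
        ((2 * Real.pi * (p : ℝ) * (1 - ρ ^ p) / (1 + ρ ^ p) >
            2 * Real.pi * (1 - ρ) / (1 + ρ) + 2 * Real.pi * ((p : ℝ) - 1)) ↔ g ρ < 0) ∧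
        (g ρ < 0 ↔ ρ < ρ')) ∧
      (p = 2 → ρ' = Real.sqrt 2 - 1) := by
  obtain ⟨q, rfl⟩ : ∃ q, p = q + 1 := ⟨p - 1, by omega⟩
  have hq : 1 ≤ q := by omega
  have hq' : (1 : ℝ) ≤ (q : ℝ) := by exact_mod_cast hq
  simp only [Nat.add_sub_cancel] at hg
  subst hg
  -- strict monotonicity
  have hmono : StrictMonoOn
      (fun t : ℝ => (((q + 1 : ℕ) : ℝ) - 1) * t ^ (q + 1) + ((q + 1 : ℕ) : ℝ) * t ^ q - 1)
      (Set.Icc (0 : ℝ) 1) := by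
    intro x hx y hy hxy
    simp only
    have h1 : x ^ (q + 1) ≤ y ^ (q + 1) :=
      (pow_lt_pow_left₀ hxy hx.1 (by omega)).le
    have h2 : x ^ q < y ^ q := pow_lt_pow_left₀ hxy hx.1 (by omega)
    push_cast
    have e1 : ((q : ℝ) + 1 - 1) * x ^ (q + 1) ≤ ((q : ℝ) + 1 - 1) * y ^ (q + 1) := by
      apply mul_le_mul_of_nonneg_left h1; linarith
    have e2 : ((q : ℝ) + 1) * x ^ q < ((q : ℝ) + 1) * y ^ q := by
      apply mul_lt_mul_of_pos_left h2; linarith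
    linarith
  have hg0 : (fun t : ℝ => (((q + 1 : ℕ) : ℝ) - 1) * t ^ (q + 1) + ((q + 1 : ℕ) : ℝ) * t ^ q - 1) 0
      = -1 := by
    simp only
    rw [zero_pow (by omega), zero_pow (by omega)]; ring
  have hg1 : (fun t : ℝ => (((q + 1 : ℕ) : ℝ) - 1) * t ^ (q + 1) + ((q + 1 : ℕ) : ℝ) * t ^ q - 1) 1
      = 2 * (((q + 1 : ℕ) : ℝ) - 1) := by
    simp only [one_pow]; push_cast; ring
  have hpos : (0 : ℝ) < 2 * (((q + 1 : ℕ) : ℝ) - 1) := by push_cast; linarith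
  refine ⟨hmono, hg0, hg1, hpos, ?_⟩
  -- existence of the root
  have hcont : ContinuousOn
      (fun t : ℝ => (((q + 1 : ℕ) : ℝ) - 1) * t ^ (q + 1) + ((q + 1 : ℕ) : ℝ) * t ^ q - 1)
      (Set.Icc (0 : ℝ) 1) := by fun_prop
  have hivt := intermediate_value_Ioo (by norm_num : (0:ℝ) ≤ 1) hcont
  have h0mem : (0 : ℝ) ∈ Set.Ioo
      ((fun t : ℝ => (((q + 1 : ℕ) : ℝ) - 1) * t ^ (q + 1) + ((q + 1 : ℕ) : ℝ) * t ^ q - 1) 0)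
      ((fun t : ℝ => (((q + 1 : ℕ) : ℝ) - 1) * t ^ (q + 1) + ((q + 1 : ℕ) : ℝ) * t ^ q - 1) 1) := by
    rw [hg0, hg1]; constructor
    · norm_num
    · exact hpos
  obtain ⟨ρ', hρ'mem, hρ'val⟩ := hivt h0mem
  have hIooIcc : Set.Ioo (0:ℝ) 1 ⊆ Set.Icc (0:ℝ) 1 := Set.Ioo_subset_Icc_self
  refine ⟨ρ', hρ'mem, hρ'val, ?_, ?_, ?_⟩
  · -- uniqueness
    intro t ht hgt
    exact hmono.injOn (hIooIcc ht) (hIooIcc hρ'mem) (hgt.trans hρ'val.symm)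
  · -- the two iffs
    intro ρ hρ
    have hρ0 : (0:ℝ) < ρ := hρ.1
    have hρ1 : ρ < 1 := hρ.2
    have hA : (0:ℝ) < 1 + ρ ^ (q + 1) := by positivity
    have hB : (0:ℝ) < 1 + ρ := by linarith
    have hπ : (0:ℝ) < Real.pi := Real.pi_pos
    constructor
    · -- energy inequality iff g ρ < 0
      have key : 2 * Real.pi * ((q + 1 : ℕ) : ℝ) * (1 - ρ ^ (q + 1)) / (1 + ρ ^ (q + 1)) -
          (2 * Real.pi * (1 - ρ) / (1 + ρ) + 2 * Real.pi * (((q + 1 : ℕ) : ℝ) - 1)) =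
          (2 * Real.pi * (2 * ρ) / ((1 + ρ ^ (q + 1)) * (1 + ρ))) *
            (-((fun t : ℝ => (((q + 1 : ℕ) : ℝ) - 1) * t ^ (q + 1) + ((q + 1 : ℕ) : ℝ) * t ^ q - 1) ρ)) := by
        simp only
        push_cast
        field_simp
        ring
      rw [gt_iff_lt, ← sub_pos, key]
      have hc : (0:ℝ) < 2 * Real.pi * (2 * ρ) / ((1 + ρ ^ (q + 1)) * (1 + ρ)) := by positivity
      rw [mul_pos_iff_of_pos_left hc, neg_pos]
    · -- g ρ < 0 iff ρ < ρ'
      rw [← hρ'val]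
      exact hmono.lt_iff_lt (hIooIcc hρ) (hIooIcc hρ'mem)
  · -- p = 2 case
    intro hp2
    have hq1 : q = 1 := by omega
    subst hq1
    have hs2 : Real.sqrt 2 ^ 2 = 2 := Real.sq_sqrt (by norm_num)
    have hs1 : (1:ℝ) < Real.sqrt 2 := by
      nlinarith [Real.sqrt_nonneg 2]
    have hs2' : Real.sqrt 2 < 2 := by
      nlinarith [Real.sqrt_nonneg 2]
    have hmem : Real.sqrt 2 - 1 ∈ Set.Ioo (0:ℝ) 1 := ⟨by linarith, by linarith⟩
    have hval : (fun t : ℝ => (((1 + 1 : ℕ) : ℝ) - 1) * t ^ (1 + 1) + ((1 + 1 : ℕ) : ℝ) * t ^ 1 - 1)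
        (Real.sqrt 2 - 1) = 0 := by
      simp only
      push_cast
      linear_combination hs2
    exact (hmono.injOn (hIooIcc hmem) (hIooIcc hρ'mem) (hval.trans hρ'val.symm)).symm
end

section
/- For each integer p ≥ 2 let ρ'_p ∈ (0,1) be the unique zero of g_p(t) = (p−1)t^p + p·t^{p−1} − 1 in (0,1). Then the sequence (ρ'_p)_{p ≥ 2} is strictly increasing: ρ'_p < ρ'_{p+1} for every integer p ≥ 2. -/
/-- The sequence `(ρ'_p)` of zeros of `g_p(t) = (p−1)t^p + p t^{p−1} − 1` in `(0,1)` is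
strictly increasing: if `a` is the zero of `g_p` and `b` the zero of `g_{p+1}`, then `a < b`. -/
theorem stmt12 (p : ℕ) (hp : 2 ≤ p) (a b : ℝ)
    (ha : a ∈ Set.Ioo (0 : ℝ) 1) (hb : b ∈ Set.Ioo (0 : ℝ) 1)
    (hga : ((p : ℝ) - 1) * a ^ p + (p : ℝ) * a ^ (p - 1) - 1 = 0)
    (hgb : (p : ℝ) * b ^ (p + 1) + ((p : ℝ) + 1) * b ^ p - 1 = 0) :
    a < b := by
  obtain ⟨ha0, ha1⟩ := ha
  obtain ⟨hb0, hb1⟩ := hb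
  obtain ⟨k, rfl⟩ := Nat.exists_eq_add_of_le hp
  have hsub : 2 + k - 1 = 1 + k := by omega
  rw [hsub] at hga
  push_cast at hga hgb
  set K : ℝ := (k : ℝ) with hK
  have hK0 : (0:ℝ) ≤ K := Nat.cast_nonneg k
  have hKpos : (0:ℝ) < K + 2 := by positivity
  -- Claim A : a < (K+1)/(K+2)
  have hA : a < (K + 1) / (K + 2) := by
    by_contra h
    push_neg at h
    have hx : (-2:ℝ) ≤ -(1/(K+2)) := by
      rw [neg_le_neg_iff, div_le_iff₀ hKpos]
      nlinarith
    have hbern := one_add_mul_le_pow hx (1+k)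
    have heq : (1:ℝ) + (-(1/(K+2))) = (K+1)/(K+2) := by
      field_simp
      ring
    rw [heq] at hbern
    push_cast at hbern
    have h2 : (1:ℝ)/(K+2) ≤ ((K+1)/(K+2)) ^ (1+k) := by
      have heq2 : (1:ℝ) + (1 + K) * -(1/(K+2)) = 1/(K+2) := by
        field_simp
        ring
      linarith [hbern, heq2.le, heq2.ge]
    have h3 : ((K+1)/(K+2)) ^ (1+k) ≤ a ^ (1+k) :=
      pow_le_pow_left₀ (by positivity) h (1+k)
    set c : ℝ := a ^ (1+k) with hc
    have h4 : (1:ℝ) ≤ (K+2) * c := by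
      rw [← div_le_iff₀' hKpos]
      exact le_trans h2 h3
    have h5 : K + 1 ≤ (K+2) * a := by
      rw [← div_le_iff₀' hKpos]
      exact h
    have hpow : a ^ (2+k) = c * a := by rw [hc]; ring
    rw [hpow] at hga
    have P1 : 1 * (K+1) ≤ ((K+2)*c) * ((K+2)*a) :=
      mul_le_mul h4 h5 (by positivity) (by nlinarith [pow_pos ha0 (1+k)])
    nlinarith [hga, h4, P1, sq_nonneg (K+1)]
  -- Claim B : quadratic negative
  have hB : (K + 2) * a ^ 2 + 2 * a - (K + 2) < 0 := by
    have hu : a * (K+2) < K + 1 := by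
      rw [← lt_div_iff₀ hKpos]
      exact hA
    nlinarith [hu, mul_pos ha0 hKpos, sq_nonneg (a*(K+2))]
  -- g_{p+1}(a) < 0
  have hfa : (2 + K) * a ^ (2 + k + 1) + (2 + K + 1) * a ^ (2 + k) - 1 < 0 := by
    have hid : (2 + K) * a ^ (2 + k + 1) + (2 + K + 1) * a ^ (2 + k) - 1
        = ((2 + K - 1) * a ^ (2 + k) + (2 + K) * a ^ (1 + k) - 1)
          + a ^ (1+k) * ((K + 2) * a ^ 2 + 2 * a - (K + 2)) := by
      ring
    rw [hid, hga]
    have := mul_neg_of_pos_of_neg (pow_pos ha0 (1+k)) hB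
    linarith
  -- conclude
  by_contra hba
  push_neg at hba
  have h1 : b ^ (2+k+1) ≤ a ^ (2+k+1) := pow_le_pow_left₀ hb0.le hba _
  have h2 : b ^ (2+k) ≤ a ^ (2+k) := pow_le_pow_left₀ hb0.le hba _
  nlinarith [hfa, h1, h2, hgb]
end

section
/- Let 0 < ρ < 1, let u : A_ρ → ℂ be twice continuously differentiable with Δu = 0 on A_ρ, and suppose there is a real number c < 0 such that H_u(z) = c/z² for all z ∈ A_ρ. Define h(x,y) = √(−c)·ln(x² + y²) and X = (Re u, Im u, h) : A_ρ → ℝ³. Then at every point of A_ρ one has ⟨∂ₓX, ∂_y X⟩ = 0 and |∂ₓX|² = |∂_y X|² > 0 (so X is a conformal immersion), and each of the three components of X is harmonic (so X is a conformal parametrization of a minimal surface). -/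
open Complex MeasureTheory

noncomputable section

/-- Partial derivative in the `x`-direction (as a function of `z = x + iy`). -/
def pdx (u : ℂ → ℂ) (z : ℂ) : ℂ := fderiv ℝ u z 1

/-- Partial derivative in the `y`-direction. -/
def pdy (u : ℂ → ℂ) (z : ℂ) : ℂ := fderiv ℝ u z Complex.I

/-- Wirtinger derivative `∂_z u = (1/2)(∂ₓu − i ∂_y u)`. -/
def wirt (u : ℂ → ℂ) (z : ℂ) : ℂ := (1 / 2) * (pdx u z - Complex.I * pdy u z)

/-- Hopf differential coefficient `H_u(z) = ∂_z u · ∂_z ū`. -/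
def hopf (u : ℂ → ℂ) (z : ℂ) : ℂ :=
  wirt u z * wirt (fun w => (starRingEnd ℂ) (u w)) z

/-- Open annulus `A_ρ = {ρ < |z| < 1}`. -/
def ann (ρ : ℝ) : Set ℂ := {z : ℂ | ρ < ‖z‖ ∧ ‖z‖ < 1}

/-- Closed annulus `Ā_ρ = {ρ ≤ |z| ≤ 1}`. -/
def cann (ρ : ℝ) : Set ℂ := {z : ℂ | ρ ≤ ‖z‖ ∧ ‖z‖ ≤ 1}

/-- Boundary `∂A_ρ`, the union of the circles `|z| = 1` and `|z| = ρ`. -/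
def bdry (ρ : ℝ) : Set ℂ := {z : ℂ | ‖z‖ = 1 ∨ ‖z‖ = ρ}

/-- Wedge product `a ∧ b = Re a · Im b − Im a · Re b`. -/
def wedge (a b : ℂ) : ℝ := a.re * b.im - a.im * b.re

/-- Radial derivative `∂_r u(z)`, the directional derivative in direction `z/|z|`. -/
def rderiv (u : ℂ → ℂ) (z : ℂ) : ℂ := fderiv ℝ u z (z / (‖z‖ : ℂ))

/-- Degree of `u` on the circle `|z| = r`:
`deg(u, C_r) = (1/2π) ∫₀^{2π} u(re^{iθ}) ∧ ∂_θ[u(re^{iθ})] dθ`. -/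
def degCirc (u : ℂ → ℂ) (r : ℝ) : ℝ :=
  (1 / (2 * Real.pi)) * ∫ θ in (0:ℝ)..(2 * Real.pi),
    wedge (u ((r : ℂ) * Complex.exp (Complex.I * θ)))
      (deriv (fun t : ℝ => u ((r : ℂ) * Complex.exp (Complex.I * t))) θ)

/-- Dirichlet energy `E(u) = (1/2) ∫_{A_ρ} (|∂ₓu|² + |∂_y u|²)`. -/
def energy (ρ : ℝ) (u : ℂ → ℂ) : ℝ :=
  (1 / 2) * ∫ z in ann ρ, (‖pdx u z‖ ^ 2 + ‖pdy u z‖ ^ 2)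

end

/-- Partial derivative in the `x`-direction of a real-valued function on `ℂ`. -/
noncomputable def pdxR (f : ℂ → ℝ) (z : ℂ) : ℝ := fderiv ℝ f z 1

/-- Partial derivative in the `y`-direction of a real-valued function on `ℂ`. -/
noncomputable def pdyR (f : ℂ → ℝ) (z : ℂ) : ℝ := fderiv ℝ f z Complex.I

noncomputable def DG (z : ℂ) : ℂ →L[ℝ] ℝ :=
  (2*z.re) • (Complex.reCLM : ℂ →L[ℝ] ℝ) + (2*z.im) • (Complex.imCLM : ℂ →L[ℝ] ℝ)

lemma gpos {z : ℂ} (hz : z ≠ 0) : 0 < z.re ^ 2 + z.im ^ 2 := by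
  have := Complex.normSq_pos.mpr hz
  simpa [Complex.normSq_apply, pow_two] using this

lemma hasFDerivAt_G (z : ℂ) :
    HasFDerivAt (fun w : ℂ => w.re ^ 2 + w.im ^ 2) (DG z) z := by
  have h1 : HasFDerivAt (fun w : ℂ => w.re) (Complex.reCLM : ℂ →L[ℝ] ℝ) z :=
    Complex.reCLM.hasFDerivAt
  have h2 : HasFDerivAt (fun w : ℂ => w.im) (Complex.imCLM : ℂ →L[ℝ] ℝ) z :=
    Complex.imCLM.hasFDerivAt
  have h := (h1.mul h1).add (h2.mul h2)
  have hfun : (fun w : ℂ => w.re ^ 2 + w.im ^ 2)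
      = fun w : ℂ => w.re * w.re + w.im * w.im := by
    funext w; ring
  rw [hfun]
  exact h.congr_fderiv (by ext w <;> simp [DG] <;> ring)

lemma hasFDerivAt_H (k : ℝ) {z : ℂ} (hz : z ≠ 0) :
    HasFDerivAt (fun w : ℂ => k * Real.log (w.re ^ 2 + w.im ^ 2))
      ((k * (z.re ^ 2 + z.im ^ 2)⁻¹) • DG z) z := by
  have h := ((hasFDerivAt_G z).log (ne_of_gt (gpos hz))).const_mul k
  rw [← smul_smul] at *
  exact h

lemma pdxR_H (k : ℝ) {z : ℂ} (hz : z ≠ 0) :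
    pdxR (fun w : ℂ => k * Real.log (w.re ^ 2 + w.im ^ 2)) z
      = k * (z.re ^ 2 + z.im ^ 2)⁻¹ * (2 * z.re) := by
  rw [pdxR, (hasFDerivAt_H k hz).fderiv]
  simp [DG]

lemma pdyR_H (k : ℝ) {z : ℂ} (hz : z ≠ 0) :
    pdyR (fun w : ℂ => k * Real.log (w.re ^ 2 + w.im ^ 2)) z
      = k * (z.re ^ 2 + z.im ^ 2)⁻¹ * (2 * z.im) := by
  rw [pdyR, (hasFDerivAt_H k hz).fderiv]
  simp [DG]

lemma hasFDerivAt_psix (k : ℝ) {z : ℂ} (hz : z ≠ 0) :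
    HasFDerivAt (fun w : ℂ => k * (w.re ^ 2 + w.im ^ 2)⁻¹ * (2 * w.re))
      ((k * (z.re ^ 2 + z.im ^ 2)⁻¹) • ((2:ℝ) • (Complex.reCLM : ℂ →L[ℝ] ℝ)) +
        (2 * z.re) • (k • ((-(((z.re ^ 2 + z.im ^ 2)) ^ 2)⁻¹) • DG z))) z := by
  have hinv : HasFDerivAt (fun w : ℂ => (w.re ^ 2 + w.im ^ 2)⁻¹)
      ((-(((z.re ^ 2 + z.im ^ 2)) ^ 2)⁻¹) • DG z) z :=
    (hasDerivAt_inv (ne_of_gt (gpos hz))).comp_hasFDerivAt z (hasFDerivAt_G z)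
  have hre : HasFDerivAt (fun w : ℂ => 2 * w.re) ((2:ℝ) • (Complex.reCLM : ℂ →L[ℝ] ℝ)) z :=
    Complex.reCLM.hasFDerivAt.const_mul 2
  exact (hinv.const_mul k).mul hre

lemma hasFDerivAt_psiy (k : ℝ) {z : ℂ} (hz : z ≠ 0) :
    HasFDerivAt (fun w : ℂ => k * (w.re ^ 2 + w.im ^ 2)⁻¹ * (2 * w.im))
      ((k * (z.re ^ 2 + z.im ^ 2)⁻¹) • ((2:ℝ) • (Complex.imCLM : ℂ →L[ℝ] ℝ)) +
        (2 * z.im) • (k • ((-(((z.re ^ 2 + z.im ^ 2)) ^ 2)⁻¹) • DG z))) z := by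
  have hinv : HasFDerivAt (fun w : ℂ => (w.re ^ 2 + w.im ^ 2)⁻¹)
      ((-(((z.re ^ 2 + z.im ^ 2)) ^ 2)⁻¹) • DG z) z :=
    (hasDerivAt_inv (ne_of_gt (gpos hz))).comp_hasFDerivAt z (hasFDerivAt_G z)
  have him : HasFDerivAt (fun w : ℂ => 2 * w.im) ((2:ℝ) • (Complex.imCLM : ℂ →L[ℝ] ℝ)) z :=
    Complex.imCLM.hasFDerivAt.const_mul 2
  exact (hinv.const_mul k).mul him

lemma lapH (k : ℝ) {z : ℂ} (hz : z ≠ 0) :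
    pdxR (pdxR (fun w : ℂ => k * Real.log (w.re ^ 2 + w.im ^ 2))) z
      + pdyR (pdyR (fun w : ℂ => k * Real.log (w.re ^ 2 + w.im ^ 2))) z = 0 := by
  have hnz : ∀ᶠ w in nhds z, w ≠ 0 := isOpen_compl_singleton.eventually_mem hz
  have hevx : pdxR (fun w : ℂ => k * Real.log (w.re ^ 2 + w.im ^ 2))
      =ᶠ[nhds z] fun w : ℂ => k * (w.re ^ 2 + w.im ^ 2)⁻¹ * (2 * w.re) := by
    filter_upwards [hnz] with w hw
    exact pdxR_H k hw
  have hevy : pdyR (fun w : ℂ => k * Real.log (w.re ^ 2 + w.im ^ 2))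
      =ᶠ[nhds z] fun w : ℂ => k * (w.re ^ 2 + w.im ^ 2)⁻¹ * (2 * w.im) := by
    filter_upwards [hnz] with w hw
    exact pdyR_H k hw
  have hx : pdxR (pdxR (fun w : ℂ => k * Real.log (w.re ^ 2 + w.im ^ 2))) z
      = fderiv ℝ (fun w : ℂ => k * (w.re ^ 2 + w.im ^ 2)⁻¹ * (2 * w.re)) z 1 := by
    rw [pdxR, hevx.fderiv_eq]
  have hy : pdyR (pdyR (fun w : ℂ => k * Real.log (w.re ^ 2 + w.im ^ 2))) z
      = fderiv ℝ (fun w : ℂ => k * (w.re ^ 2 + w.im ^ 2)⁻¹ * (2 * w.im)) z Complex.I := by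
    rw [pdyR, hevy.fderiv_eq]
  rw [hx, hy, (hasFDerivAt_psix k hz).fderiv, (hasFDerivAt_psiy k hz).fderiv]
  have hg := gpos hz
  simp [DG]
  field_simp
  ring

section
variable (u : ℂ → ℂ) {s : Set ℂ} {z : ℂ} (v v' : ℂ)

lemma first_re (hud : DifferentiableAt ℝ u z) :
    fderiv ℝ (fun t => (u t).re) z v = (fderiv ℝ u z v).re := by
  have h : HasFDerivAt (fun t => (u t).re) (Complex.reCLM.comp (fderiv ℝ u z)) z :=
    Complex.reCLM.hasFDerivAt.comp z hud.hasFDerivAt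
  rw [h.fderiv]; rfl

lemma first_im (hud : DifferentiableAt ℝ u z) :
    fderiv ℝ (fun t => (u t).im) z v = (fderiv ℝ u z v).im := by
  have h : HasFDerivAt (fun t => (u t).im) (Complex.imCLM.comp (fderiv ℝ u z)) z :=
    Complex.imCLM.hasFDerivAt.comp z hud.hasFDerivAt
  rw [h.fderiv]; rfl

lemma first_conj (hud : DifferentiableAt ℝ u z) :
    fderiv ℝ (fun t => (starRingEnd ℂ) (u t)) z v = (starRingEnd ℂ) (fderiv ℝ u z v) := by
  have h : HasFDerivAt (fun t => (starRingEnd ℂ) (u t))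
      (Complex.conjCLE.toContinuousLinearMap.comp (fderiv ℝ u z)) z :=
    Complex.conjCLE.toContinuousLinearMap.hasFDerivAt.comp z hud.hasFDerivAt
  rw [h.fderiv]; rfl

lemma second_re (ho : IsOpen s) (hz : z ∈ s)
    (hud : ∀ w ∈ s, DifferentiableAt ℝ u w)
    (hd : DifferentiableAt ℝ (fun w => fderiv ℝ u w v') z) :
    fderiv ℝ (fun w => fderiv ℝ (fun t => (u t).re) w v') z v
      = (fderiv ℝ (fun w => fderiv ℝ u w v') z v).re := by
  have hev : (fun w => fderiv ℝ (fun t => (u t).re) w v') =ᶠ[nhds z]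
      fun w => (fderiv ℝ u w v').re := by
    filter_upwards [ho.mem_nhds hz] with w hw
    exact first_re u v' (hud w hw)
  rw [hev.fderiv_eq]
  exact first_re _ v hd

lemma second_im (ho : IsOpen s) (hz : z ∈ s)
    (hud : ∀ w ∈ s, DifferentiableAt ℝ u w)
    (hd : DifferentiableAt ℝ (fun w => fderiv ℝ u w v') z) :
    fderiv ℝ (fun w => fderiv ℝ (fun t => (u t).im) w v') z v
      = (fderiv ℝ (fun w => fderiv ℝ u w v') z v).im := by
  have hev : (fun w => fderiv ℝ (fun t => (u t).im) w v') =ᶠ[nhds z]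
      fun w => (fderiv ℝ u w v').im := by
    filter_upwards [ho.mem_nhds hz] with w hw
    exact first_im u v' (hud w hw)
  rw [hev.fderiv_eq]
  exact first_im _ v hd

end


/-- If `u` is harmonic on `A_ρ` with `H_u(z) = c/z²`, `c < 0`, then
`X = (Re u, Im u, √(−c)·ln(x² + y²))` is a conformal immersion whose components are
harmonic, i.e. a conformal parametrization of a minimal surface. -/
theorem stmt17 (ρ : ℝ) (hρ0 : 0 < ρ) (hρ1 : ρ < 1) (u : ℂ → ℂ)
    (hreg : ContDiffOn ℝ 2 u (ann ρ))
    (hharm : ∀ z ∈ ann ρ, pdx (pdx u) z + pdy (pdy u) z = 0)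
    (c : ℝ) (hc : c < 0)
    (hhopf : ∀ z ∈ ann ρ, hopf u z = (c : ℂ) / z ^ 2)
    (h X1 X2 X3 : ℂ → ℝ)
    (hh : h = fun z => Real.sqrt (-c) * Real.log (z.re ^ 2 + z.im ^ 2))
    (hX1 : X1 = fun z => (u z).re) (hX2 : X2 = fun z => (u z).im) (hX3 : X3 = h) :
    ∀ z ∈ ann ρ,
      (pdxR X1 z * pdyR X1 z + pdxR X2 z * pdyR X2 z + pdxR X3 z * pdyR X3 z = 0) ∧
      ((pdxR X1 z) ^ 2 + (pdxR X2 z) ^ 2 + (pdxR X3 z) ^ 2 =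
        (pdyR X1 z) ^ 2 + (pdyR X2 z) ^ 2 + (pdyR X3 z) ^ 2) ∧
      (0 < (pdxR X1 z) ^ 2 + (pdxR X2 z) ^ 2 + (pdxR X3 z) ^ 2) ∧
      (pdxR (pdxR X1) z + pdyR (pdyR X1) z = 0) ∧
      (pdxR (pdxR X2) z + pdyR (pdyR X2) z = 0) ∧
      (pdxR (pdxR X3) z + pdyR (pdyR X3) z = 0) := by
  subst hX3 hh hX1 hX2
  intro z hz
  have ho : IsOpen (ann ρ) := by
    have he : ann ρ = (fun w : ℂ => ‖w‖) ⁻¹' (Set.Ioo ρ 1) := rfl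
    rw [he]
    exact isOpen_Ioo.preimage continuous_norm
  have hz0 : z ≠ 0 := by
    intro h0
    rw [h0] at hz
    simp only [ann, Set.mem_setOf_eq, map_zero, norm_zero] at hz
    linarith [hz.1]
  have hzmem : ann ρ ∈ nhds z := ho.mem_nhds hz
  have hg : 0 < z.re ^ 2 + z.im ^ 2 := gpos hz0
  have hgne : z.re ^ 2 + z.im ^ 2 ≠ 0 := ne_of_gt hg
  have hcpos : (0:ℝ) < -c := by linarith
  have hk2 : Real.sqrt (-c) ^ 2 = -c := Real.sq_sqrt (le_of_lt hcpos)
  have hud : ∀ w ∈ ann ρ, DifferentiableAt ℝ u w := fun w hw =>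
    (hreg.differentiableOn (by norm_num)).differentiableAt (ho.mem_nhds hw)
  have hdf : DifferentiableAt ℝ (fderiv ℝ u) z :=
    ((hreg.fderiv_of_isOpen (m := 1) ho (by norm_num)).differentiableOn one_ne_zero).differentiableAt hzmem
  have hd1 : DifferentiableAt ℝ (fun w => fderiv ℝ u w 1) z :=
    hdf.clm_apply (differentiableAt_const _)
  have hdI : DifferentiableAt ℝ (fun w => fderiv ℝ u w Complex.I) z :=
    hdf.clm_apply (differentiableAt_const _)
  -- first-derivative identities
  have f1x : pdxR (fun v => (u v).re) z = (fderiv ℝ u z 1).re := first_re u 1 (hud z hz)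
  have f1y : pdyR (fun v => (u v).re) z = (fderiv ℝ u z Complex.I).re :=
    first_re u Complex.I (hud z hz)
  have f2x : pdxR (fun v => (u v).im) z = (fderiv ℝ u z 1).im := first_im u 1 (hud z hz)
  have f2y : pdyR (fun v => (u v).im) z = (fderiv ℝ u z Complex.I).im :=
    first_im u Complex.I (hud z hz)
  have f3x := pdxR_H (Real.sqrt (-c)) hz0
  have f3y := pdyR_H (Real.sqrt (-c)) hz0
  -- the Hopf relation, in real coordinates
  have hhopf' : (1/2 : ℂ) * (fderiv ℝ u z 1 - Complex.I * fderiv ℝ u z Complex.I) *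
      ((1/2 : ℂ) * (fderiv ℝ (fun w => (starRingEnd ℂ) (u w)) z 1
        - Complex.I * fderiv ℝ (fun w => (starRingEnd ℂ) (u w)) z Complex.I)) = (c : ℂ) / z ^ 2 :=
    hhopf z hz
  rw [first_conj u 1 (hud z hz), first_conj u Complex.I (hud z hz)] at hhopf'
  rw [eq_div_iff (pow_ne_zero 2 hz0)] at hhopf'
  have hE : (fderiv ℝ u z 1 - Complex.I * fderiv ℝ u z Complex.I) *
      ((starRingEnd ℂ) (fderiv ℝ u z 1) - Complex.I * (starRingEnd ℂ) (fderiv ℝ u z Complex.I))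
        * z ^ 2 = 4 * (c : ℂ) := by
    linear_combination 4 * hhopf'
  obtain ⟨hEre, hEim⟩ := Complex.ext_iff.mp hE
  simp only [Complex.mul_re, Complex.mul_im, Complex.sub_re, Complex.sub_im,
    Complex.conj_re, Complex.conj_im, Complex.I_re, Complex.I_im, pow_two,
    Complex.ofReal_re, Complex.ofReal_im, Complex.re_ofNat, Complex.im_ofNat] at hEre hEim
  set ar := (fderiv ℝ u z 1).re with har
  set ai := (fderiv ℝ u z 1).im with hai
  set br := (fderiv ℝ u z Complex.I).re with hbr
  set bi := (fderiv ℝ u z Complex.I).im with hbi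
  set x := z.re with hx
  set y := z.im with hy
  -- solve the linear system
  have hS : (ar * br + ai * bi) * (x ^ 2 + y ^ 2) ^ 2 = 4 * c * x * y := by
    linear_combination (x*y) * hEre - ((x^2-y^2)/2) * hEim
  have hP : (ar ^ 2 + ai ^ 2 - br ^ 2 - bi ^ 2) * (x ^ 2 + y ^ 2) ^ 2
      = 4 * c * (x ^ 2 - y ^ 2) := by
    linear_combination (x^2-y^2) * hEre + (2*x*y) * hEim
  -- conformality
  have goal1 : pdxR (fun v => (u v).re) z * pdyR (fun v => (u v).re) z +
      pdxR (fun v => (u v).im) z * pdyR (fun v => (u v).im) z +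
      pdxR (fun w : ℂ => Real.sqrt (-c) * Real.log (w.re ^ 2 + w.im ^ 2)) z *
        pdyR (fun w : ℂ => Real.sqrt (-c) * Real.log (w.re ^ 2 + w.im ^ 2)) z = 0 := by
    rw [f1x, f1y, f2x, f2y, f3x, f3y]
    have hinv : (x ^ 2 + y ^ 2)⁻¹ * (x ^ 2 + y ^ 2) = 1 := inv_mul_cancel₀ hgne
    have hSdiv : ar * br + ai * bi = 4 * c * x * y * ((x ^ 2 + y ^ 2)⁻¹) ^ 2 := by
      linear_combination (((x ^ 2 + y ^ 2)⁻¹) ^ 2) * hS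
        - ((ar * br + ai * bi) * ((x ^ 2 + y ^ 2) * (x ^ 2 + y ^ 2)⁻¹ + 1)) * hinv
    have hprod : (Real.sqrt (-c) * (x ^ 2 + y ^ 2)⁻¹ * (2 * x)) *
        (Real.sqrt (-c) * (x ^ 2 + y ^ 2)⁻¹ * (2 * y))
          = (-c) * (4 * x * y) * ((x ^ 2 + y ^ 2)⁻¹) ^ 2 := by
      linear_combination (4 * x * y * ((x ^ 2 + y ^ 2)⁻¹) ^ 2) * hk2
    rw [hSdiv, hprod]
    ring
  have goal2 : pdxR (fun v => (u v).re) z ^ 2 + pdxR (fun v => (u v).im) z ^ 2 +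
      pdxR (fun w : ℂ => Real.sqrt (-c) * Real.log (w.re ^ 2 + w.im ^ 2)) z ^ 2 =
      pdyR (fun v => (u v).re) z ^ 2 + pdyR (fun v => (u v).im) z ^ 2 +
      pdyR (fun w : ℂ => Real.sqrt (-c) * Real.log (w.re ^ 2 + w.im ^ 2)) z ^ 2 := by
    rw [f1x, f1y, f2x, f2y, f3x, f3y]
    have hinv : (x ^ 2 + y ^ 2)⁻¹ * (x ^ 2 + y ^ 2) = 1 := inv_mul_cancel₀ hgne
    have hPdiv : ar ^ 2 + ai ^ 2 - br ^ 2 - bi ^ 2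
        = 4 * c * (x ^ 2 - y ^ 2) * ((x ^ 2 + y ^ 2)⁻¹) ^ 2 := by
      linear_combination (((x ^ 2 + y ^ 2)⁻¹) ^ 2) * hP
        - ((ar ^ 2 + ai ^ 2 - br ^ 2 - bi ^ 2) * ((x ^ 2 + y ^ 2) * (x ^ 2 + y ^ 2)⁻¹ + 1)) * hinv
    have hprod : (Real.sqrt (-c) * (x ^ 2 + y ^ 2)⁻¹ * (2 * x)) ^ 2 -
        (Real.sqrt (-c) * (x ^ 2 + y ^ 2)⁻¹ * (2 * y)) ^ 2
          = (-c) * (4 * (x ^ 2 - y ^ 2)) * ((x ^ 2 + y ^ 2)⁻¹) ^ 2 := by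
      linear_combination (4 * (x ^ 2 - y ^ 2) * ((x ^ 2 + y ^ 2)⁻¹) ^ 2) * hk2
    linear_combination hPdiv + hprod
  have goal3 : 0 < pdxR (fun v => (u v).re) z ^ 2 + pdxR (fun v => (u v).im) z ^ 2 +
      pdxR (fun w : ℂ => Real.sqrt (-c) * Real.log (w.re ^ 2 + w.im ^ 2)) z ^ 2 := by
    have hinv : (x ^ 2 + y ^ 2)⁻¹ * (x ^ 2 + y ^ 2) = 1 := inv_mul_cancel₀ hgne
    have hval : (Real.sqrt (-c) * (x ^ 2 + y ^ 2)⁻¹ * (2 * x)) ^ 2 +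
        (Real.sqrt (-c) * (x ^ 2 + y ^ 2)⁻¹ * (2 * y)) ^ 2
          = 4 * (-c) * (x ^ 2 + y ^ 2)⁻¹ := by
      linear_combination (4 * ((x ^ 2 + y ^ 2)⁻¹) ^ 2 * (x ^ 2 + y ^ 2)) * hk2
        - (4 * c * (x ^ 2 + y ^ 2)⁻¹) * hinv
    have h2 := goal2
    rw [f1x, f1y, f2x, f2y, f3x, f3y] at h2
    rw [f1x, f2x, f3x]
    have hpos : 0 < 4 * (-c) * (x ^ 2 + y ^ 2)⁻¹ := by positivity
    linarith [sq_nonneg ar, sq_nonneg ai, sq_nonneg br, sq_nonneg bi, hval, h2, hpos]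
  -- harmonicity of the first two components
  have hharm' : fderiv ℝ (fun w => fderiv ℝ u w 1) z 1
      + fderiv ℝ (fun w => fderiv ℝ u w Complex.I) z Complex.I = 0 := hharm z hz
  have goal4 : pdxR (pdxR (fun v => (u v).re)) z + pdyR (pdyR (fun v => (u v).re)) z = 0 := by
    have e1 : pdxR (pdxR (fun v => (u v).re)) z
        = (fderiv ℝ (fun w => fderiv ℝ u w 1) z 1).re := second_re u 1 1 ho hz hud hd1
    have e2 : pdyR (pdyR (fun v => (u v).re)) z
        = (fderiv ℝ (fun w => fderiv ℝ u w Complex.I) z Complex.I).re :=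
      second_re u Complex.I Complex.I ho hz hud hdI
    rw [e1, e2, ← Complex.add_re, hharm', Complex.zero_re]
  have goal5 : pdxR (pdxR (fun v => (u v).im)) z + pdyR (pdyR (fun v => (u v).im)) z = 0 := by
    have e1 : pdxR (pdxR (fun v => (u v).im)) z
        = (fderiv ℝ (fun w => fderiv ℝ u w 1) z 1).im := second_im u 1 1 ho hz hud hd1
    have e2 : pdyR (pdyR (fun v => (u v).im)) z
        = (fderiv ℝ (fun w => fderiv ℝ u w Complex.I) z Complex.I).im :=
      second_im u Complex.I Complex.I ho hz hud hdI
    rw [e1, e2, ← Complex.add_im, hharm', Complex.zero_im]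
  exact ⟨goal1, goal2, goal3, goal4, goal5, lapH (Real.sqrt (-c)) hz0⟩
end
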